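/- If there exists a normed (monic) null-polynomial modulo n of degree m, then n divides m!. Consequently, no monic polynomial of degree strictly less than s(n) can vanish modulo n at all integers. -/
import Mathlib

open Polynomial Finset

/-- Coefficients of `p.comp (X + 1)` as a sum of binomial-weighted coefficients. -/
lemma comp_coeff (p : Polynomial ℤ) (m : ℕ) (hd : p.natDegree ≤ m + 1) (i : ℕ) :
    (p.comp (X + 1)).coeff i = ∑ j ∈ range (m + 2), p.coeff j * (j.choose i) := by
  conv_lhs => rw [p.as_sum_range' (m+2) (by omega)]
  simp [eval₂_finset_sum, coeff_X_add_one_pow, mul_comm]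

lemma diff_coeff (p : Polynomial ℤ) (m : ℕ) (hd : p.natDegree ≤ m + 1) :
    (p.comp (X + 1) - p).coeff m = (m + 1) * p.coeff (m + 1) := by
  rw [Polynomial.coeff_sub, comp_coeff p m hd]
  rw [show m + 2 = m + 1 + 1 from rfl, Finset.sum_range_succ, Finset.sum_range_succ]
  have h0 : ∑ j ∈ range m, p.coeff j * (j.choose m : ℤ) = 0 := by
    apply Finset.sum_eq_zero
    intro j hj
    simp [Nat.choose_eq_zero_of_lt (Finset.mem_range.mp hj)]
  rw [h0]
  simp [Nat.choose_succ_self_right]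
  ring

lemma diff_natDegree (p : Polynomial ℤ) (m : ℕ) (hd : p.natDegree ≤ m + 1) :
    (p.comp (X + 1) - p).natDegree ≤ m := by
  rw [Polynomial.natDegree_le_iff_coeff_eq_zero]
  intro i hi
  rw [Polynomial.coeff_sub, comp_coeff p m hd]
  have : ∀ j ∈ range (m + 2), p.coeff j * (j.choose i : ℤ) =
      if j = i then p.coeff i else 0 := by
    intro j hj
    rcases lt_trichotomy j i with hlt | rfl | hgt
    · simp [Nat.choose_eq_zero_of_lt hlt, hlt.ne]
    · simp
    · have : p.coeff j = 0 := p.coeff_eq_zero_of_natDegree_lt (by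
        simp at hj; omega)
      simp [this, hgt.ne']
  rw [Finset.sum_congr rfl this, Finset.sum_ite_eq' (range (m+2)) i fun _ => p.coeff i]
  by_cases hmem : i ∈ range (m + 2)
  · simp [hmem]
  · have : p.coeff i = 0 := p.coeff_eq_zero_of_natDegree_lt (by simp at hmem; omega)
    simp [this]

/-- The `m`-th forward difference of a polynomial of degree at most `m` is the
constant `m! * (coeff m)`. -/
lemma key (m : ℕ) : ∀ (p : Polynomial ℤ), p.natDegree ≤ m →
    (fwdDiff (1:ℤ))^[m] (fun x => p.eval x) = fun _ => (Nat.factorial m : ℤ) * p.coeff m := by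
  induction m with
  | zero =>
    intro p hp
    rw [Polynomial.eq_C_of_natDegree_le_zero hp]
    simp
  | succ m ih =>
    intro p hp
    have hstep : fwdDiff (1:ℤ) (fun x => p.eval x) = fun x => (p.comp (X + 1) - p).eval x := by
      funext x
      simp [fwdDiff, Polynomial.eval_comp]
    rw [Function.iterate_succ_apply, hstep, ih _ (diff_natDegree p m hp),
      diff_coeff p m hp]
    funext x
    push_cast [Nat.factorial_succ]
    ring

/-- The Smarandache function: the least `k` with `n ∣ k!`. -/
noncomputable def smarandache (n : ℕ) : ℕ := sInf {k : ℕ | n ∣ Nat.factorial k}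

/-- If a monic integer polynomial vanishes modulo `n` at every integer, then
`n` divides `(deg p)!`; consequently its degree cannot be less than `s(n)`. -/
theorem monic_null_polynomial_degree (n : ℕ) (hn : 2 ≤ n)
    (p : Polynomial ℤ) (hp : p.Monic) (h : ∀ x : ℤ, (n : ℤ) ∣ p.eval x) :
    n ∣ Nat.factorial p.natDegree ∧ ¬ p.natDegree < smarandache n := by
  set m := p.natDegree with hm
  have hkey := congr_fun (key m p le_rfl) (0 : ℤ)
  rw [fwdDiff_iter_eq_sum_shift] at hkey
  have hcoeff : p.coeff m = 1 := hp
  have hdvd : (n : ℤ) ∣ (Nat.factorial m : ℤ) := by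
    rw [hcoeff, mul_one] at hkey
    rw [← hkey]
    refine Finset.dvd_sum fun k _ => ?_
    exact Dvd.dvd.mul_left (h _) _
  have h1 : n ∣ Nat.factorial m := Int.ofNat_dvd.mp hdvd
  refine ⟨h1, ?_⟩
  have : smarandache n ≤ m := Nat.sInf_le h1
  omega
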